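/- Let H = (V, E) be a 3-uniform hypergraph with |V| = n ≥ 2, and set ε = 1/n^{100}. Suppose each vertex a ∈ V is assigned a unit vector u_a ∈ ℝⁿ such that ‖u_a + u_b + u_c‖² ≤ 18ε for every edge {a, b, c} ∈ E. Let Δ ≥ 4 satisfy |E| ≤ Δn/3, and set α = 1/(32 Δ^{1/3} (ln Δ)^{1/2}). Then H contains an odd independent set S ⊆ V with |S| ≥ (3/4) α n. -/

import Mathlib

open scoped BigOperators

noncomputable section OddIndepAuxSection

namespace OddIndepAux

open MeasureTheory Real Set Filter

/-! ### One-dimensional Gaussian facts -/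

def phi (z : ℝ) : ℝ := (Real.sqrt (2 * Real.pi))⁻¹ * Real.exp (-z ^ 2 / 2)

lemma sqrt_two_pi_pos : 0 < Real.sqrt (2 * Real.pi) :=
  Real.sqrt_pos.2 (by positivity)

lemma phi_pos (z : ℝ) : 0 < phi z := by unfold phi; positivity
lemma phi_nonneg (z : ℝ) : 0 ≤ phi z := (phi_pos z).le

lemma phi_eq (z : ℝ) : phi z = (Real.sqrt (2 * Real.pi))⁻¹ * Real.exp (-(1/2) * z ^ 2) := by
  unfold phi; ring_nf

lemma integrable_phi : Integrable phi := by
  have h : Integrable (fun z : ℝ => Real.exp (-(1/2) * z ^ 2)) :=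
    integrable_exp_neg_mul_sq (by norm_num)
  have := h.const_mul (Real.sqrt (2 * Real.pi))⁻¹
  refine this.congr (Filter.Eventually.of_forall fun z => ?_)
  rw [phi_eq]

lemma integral_phi : ∫ z, phi z = 1 := by
  have h : ∫ z : ℝ, Real.exp (-(1/2) * z ^ 2) = Real.sqrt (Real.pi / (1/2)) :=
    integral_gaussian (1/2)
  have h2 : ∫ z, phi z = (Real.sqrt (2 * Real.pi))⁻¹ * ∫ z : ℝ, Real.exp (-(1/2) * z ^ 2) := by
    rw [← integral_const_mul]
    congr 1; ext z; rw [phi_eq]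
  rw [h2, h, show Real.pi / (1/2) = 2 * Real.pi by ring]
  field_simp

lemma phi_anti {a b : ℝ} (ha : 0 ≤ a) (hab : a ≤ b) : phi b ≤ phi a := by
  unfold phi
  apply mul_le_mul_of_nonneg_left _ (by positivity)
  apply Real.exp_le_exp.2
  nlinarith

def T (τ : ℝ) : ℝ := ∫ z in Set.Ici τ, phi z

lemma T_nonneg (τ : ℝ) : 0 ≤ T τ :=
  setIntegral_nonneg measurableSet_Ici fun z _ => phi_nonneg z

lemma T_mono {τ τ' : ℝ} (h : τ ≤ τ') : T τ' ≤ T τ := by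
  apply setIntegral_mono_set integrable_phi.integrableOn
    (Filter.Eventually.of_forall fun z => phi_nonneg z)
  exact HasSubset.Subset.eventuallyLE (Ici_subset_Ici.2 h)

lemma hasDerivAt_negphi (z : ℝ) :
    HasDerivAt (fun w : ℝ => -((Real.sqrt (2 * Real.pi))⁻¹ * Real.exp (-w ^ 2 / 2)))
      (z * phi z) z := by
  have h1 : HasDerivAt (fun w : ℝ => -w ^ 2 / 2) (-z) z := by
    have := ((hasDerivAt_pow 2 z).neg).div_const 2
    simpa using this.congr_deriv (by ring)
  have h3 := ((h1.exp).const_mul (Real.sqrt (2 * Real.pi))⁻¹).neg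
  refine h3.congr_deriv ?_
  unfold phi; ring

lemma tendsto_negphi :
    Tendsto (fun w : ℝ => -((Real.sqrt (2 * Real.pi))⁻¹ * Real.exp (-w ^ 2 / 2)))
      atTop (nhds 0) := by
  have h1 : Tendsto (fun w : ℝ => -w ^ 2 / 2) atTop atBot := by
    have h0 : Tendsto (fun w : ℝ => w ^ 2) atTop atTop := tendsto_pow_atTop (by norm_num)
    have h2 : Tendsto (fun w : ℝ => w ^ 2 / 2) atTop atTop := h0.atTop_div_const (by norm_num)
    refine (tendsto_neg_atTop_atBot.comp h2).congr fun w => ?_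
    simp [Function.comp]; ring
  have h2 : Tendsto (fun w : ℝ => Real.exp (-w ^ 2 / 2)) atTop (nhds 0) :=
    Real.tendsto_exp_atBot.comp h1
  have h3 := (h2.const_mul (Real.sqrt (2 * Real.pi))⁻¹).neg
  simpa using h3

lemma integral_id_mul_phi {s : ℝ} (hs : 0 < s) :
    (∫ z in Ioi s, z * phi z) = (Real.sqrt (2 * Real.pi))⁻¹ * Real.exp (-s ^ 2 / 2) := by
  have := integral_Ioi_of_hasDerivAt_of_nonneg'
    (g := fun w : ℝ => -((Real.sqrt (2 * Real.pi))⁻¹ * Real.exp (-w ^ 2 / 2)))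
    (g' := fun z => z * phi z) (a := s) (fun x _ => hasDerivAt_negphi x)
    (fun x hx => mul_nonneg (le_of_lt (hs.trans hx)) (phi_nonneg x)) tendsto_negphi
  rw [this]; ring

lemma integrableOn_id_mul_phi {s : ℝ} (hs : 0 < s) :
    IntegrableOn (fun z => z * phi z) (Ioi s) :=
  integrableOn_Ioi_deriv_of_nonneg' (fun x _ => hasDerivAt_negphi x)
    (fun x hx => mul_nonneg (le_of_lt (hs.trans hx)) (phi_nonneg x)) tendsto_negphi

lemma T_le {s : ℝ} (hs : 0 < s) :
    T s ≤ Real.exp (-s ^ 2 / 2) / (s * Real.sqrt (2 * Real.pi)) := by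
  have hint : IntegrableOn (fun z => z / s * phi z) (Ioi s) := by
    have h := (integrableOn_id_mul_phi hs).const_mul s⁻¹
    have : (fun z => z / s * phi z) = (fun z => s⁻¹ * (z * phi z)) := by
      funext z; ring
    rwa [this]
  have h2 : (∫ z in Ioi s, phi z) ≤ ∫ z in Ioi s, (z / s) * phi z := by
    apply setIntegral_mono_on integrable_phi.integrableOn hint measurableSet_Ioi
    intro z hz
    have h1z : (1 : ℝ) ≤ z / s := (one_le_div hs).2 (le_of_lt hz)
    nlinarith [phi_nonneg z]
  have h3 : (∫ z in Ioi s, (z / s) * phi z) = s⁻¹ * ∫ z in Ioi s, z * phi z := by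
    rw [← integral_const_mul]
    congr 1; ext z; ring
  have hst := sqrt_two_pi_pos
  calc T s = ∫ z in Ioi s, phi z := by unfold T; rw [integral_Ici_eq_integral_Ioi]
  _ ≤ ∫ z in Ioi s, (z / s) * phi z := h2
  _ = s⁻¹ * ((Real.sqrt (2 * Real.pi))⁻¹ * Real.exp (-s ^ 2 / 2)) := by
      rw [h3, integral_id_mul_phi hs]
  _ = Real.exp (-s ^ 2 / 2) / (s * Real.sqrt (2 * Real.pi)) := by
      field_simp

lemma T_ge {t : ℝ} (ht : 0 < t) (ht2 : 121 / 50 ≤ t ^ 2) :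
    3 / 10 * Real.exp (-t ^ 2 / 2) / (t * Real.sqrt (2 * Real.pi)) ≤ T t := by
  set a := 4 / (5 * t) with ha
  have hapos : 0 < a := by positivity
  have h1 : (∫ z in Icc t (t + a), phi z) ≤ T t := by
    apply setIntegral_mono_set integrable_phi.integrableOn
      (Filter.Eventually.of_forall fun z => phi_nonneg z)
    exact HasSubset.Subset.eventuallyLE (Icc_subset_Ici_self)
  have h2 : (∫ z in Icc t (t + a), (phi (t + a))) ≤ ∫ z in Icc t (t + a), phi z := by
    apply setIntegral_mono_on (integrableOn_const measure_Icc_lt_top.ne)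
      integrable_phi.integrableOn measurableSet_Icc
    intro z hz
    exact phi_anti (le_trans ht.le hz.1) hz.2
  have h3 : (∫ z in Icc t (t + a), (phi (t + a))) = a * phi (t + a) := by
    rw [setIntegral_const, Measure.real, Real.volume_Icc]
    rw [ENNReal.toReal_ofReal (by linarith)]
    rw [smul_eq_mul]; ring
  have hexp : Real.exp ((t + a) ^ 2 / 2 - t ^ 2 / 2) ≤ 8 / 3 := by
    have harg : (t + a) ^ 2 / 2 - t ^ 2 / 2 ≤ 47 / 50 := by
      have h4 : (t + a) ^ 2 / 2 - t ^ 2 / 2 = 4 / 5 + 8 / (25 * t ^ 2) := by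
        rw [ha]; field_simp; ring
      rw [h4]
      have : 8 / (25 * t ^ 2) ≤ 8 / (25 * (121 / 50)) := by
        apply div_le_div_of_nonneg_left (by norm_num) (by norm_num) (by nlinarith)
      nlinarith
    calc Real.exp ((t + a) ^ 2 / 2 - t ^ 2 / 2) ≤ Real.exp (47 / 50) := Real.exp_le_exp.2 harg
    _ = Real.exp 1 * (Real.exp (3 / 50))⁻¹ := by
        rw [← Real.exp_neg, ← Real.exp_add]; norm_num
    _ ≤ 2.7182818286 * (53 / 50)⁻¹ := by
        apply mul_le_mul (Real.exp_one_lt_d9.le) _ (by positivity) (by norm_num)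
        apply inv_anti₀ (by norm_num)
        have := Real.add_one_le_exp (3 / 50 : ℝ)
        linarith
    _ ≤ 8 / 3 := by norm_num
  have key : 3 / 10 * Real.exp (-t ^ 2 / 2) / (t * Real.sqrt (2 * Real.pi)) ≤ a * phi (t + a) := by
    have hphi : phi (t + a) = (Real.sqrt (2 * Real.pi))⁻¹ * Real.exp (-t ^ 2 / 2) *
        (Real.exp ((t + a) ^ 2 / 2 - t ^ 2 / 2))⁻¹ := by
      unfold phi
      have harg : -(t + a) ^ 2 / 2 = (-t ^ 2 / 2) + (-((t + a) ^ 2 / 2 - t ^ 2 / 2)) := by ring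
      rw [harg, Real.exp_add, Real.exp_neg]
      ring
    rw [hphi]
    have hst := sqrt_two_pi_pos
    have he1 : (0:ℝ) < Real.exp ((t + a) ^ 2 / 2 - t ^ 2 / 2) := Real.exp_pos _
    have he2 : (8/3 : ℝ)⁻¹ ≤ (Real.exp ((t + a) ^ 2 / 2 - t ^ 2 / 2))⁻¹ :=
      inv_anti₀ he1 hexp
    have hep : (0:ℝ) < Real.exp (-t ^ 2 / 2) := Real.exp_pos _
    rw [div_le_iff₀ (by positivity)]
    have expand : a * ((Real.sqrt (2 * Real.pi))⁻¹ * Real.exp (-t ^ 2 / 2) *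
        (Real.exp ((t + a) ^ 2 / 2 - t ^ 2 / 2))⁻¹) * (t * Real.sqrt (2 * Real.pi))
        = 4 / 5 * Real.exp (-t ^ 2 / 2) * (Real.exp ((t + a) ^ 2 / 2 - t ^ 2 / 2))⁻¹ := by
      rw [ha]
      field_simp
    rw [expand]
    nlinarith [mul_le_mul_of_nonneg_left he2 hep.le]
  calc 3 / 10 * Real.exp (-t ^ 2 / 2) / (t * Real.sqrt (2 * Real.pi)) ≤ a * phi (t + a) := key
  _ = ∫ z in Icc t (t + a), (phi (t + a)) := h3.symm
  _ ≤ _ := le_trans h2 h1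

/-! ### Numeric estimates -/

lemma log209_lb : 3 / 4 ≤ Real.log (20 / 9) := by
  rw [Real.le_log_iff_exp_le (by norm_num)]
  have h1 : Real.exp (3 / 4) * Real.exp (1 / 4) = Real.exp 1 := by
    rw [← Real.exp_add]; norm_num
  have h2 := Real.add_one_le_exp (1 / 4 : ℝ)
  have h3 : Real.exp 1 < 2.7182818286 := Real.exp_one_lt_d9
  nlinarith [Real.exp_pos (3 / 4), Real.exp_pos (1 / 4)]

lemma log209_ub : Real.log (20 / 9) ≤ 17 / 20 := by
  rw [Real.log_le_iff_le_exp (by norm_num)]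
  have h1 : Real.exp (17 / 20) * Real.exp (3 / 20) = Real.exp 1 := by
    rw [← Real.exp_add]; norm_num
  have h2 := Real.add_one_le_exp (-3 / 20 : ℝ)
  have h4 : Real.exp (3 / 20) * Real.exp (-3 / 20) = 1 := by
    rw [← Real.exp_add]; norm_num
  have h3 : (2.7182818283 : ℝ) < Real.exp 1 := Real.exp_one_gt_d9
  have h5 : Real.exp (3 / 20) ≤ 20 / 17 := by
    nlinarith [Real.exp_pos (3 / 20), Real.exp_pos (-3 / 20)]
  nlinarith [Real.exp_pos (17 / 20), Real.exp_pos (3 / 20)]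

lemma exp_small_le {x : ℝ} (hx0 : 0 ≤ x) (hx2 : x ≤ 1 / 200) : Real.exp x ≤ 101 / 100 := by
  have h1 : (1 : ℝ) - x ≤ Real.exp (-x) := by
    have := Real.add_one_le_exp (-x); linarith
  have h2 : Real.exp x * Real.exp (-x) = 1 := by rw [← Real.exp_add]; norm_num
  nlinarith [Real.exp_pos x, Real.exp_pos (-x)]

set_option maxHeartbeats 1600000 in
lemma numeric_core {Δ L t δ0 : ℝ} (hΔ : 4 ≤ Δ) (hL : L = Real.log Δ)
    (ht : t = Real.sqrt (2 * Real.log (20 / 9) + 2 / 3 * L))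
    (hδ0 : 0 ≤ δ0) (hδsmall : 4 * δ0 * t ^ 2 ≤ 1 / 200) :
    3 / 4 * (1 / (32 * Δ ^ ((1 : ℝ) / 3) * Real.sqrt L)) ≤ T t - Δ * T (2 * t / (1 + δ0)) := by
  have hΔpos : (0 : ℝ) < Δ := by linarith
  have hL138 : 138 / 100 ≤ L := by
    have h4 : Real.log 4 ≤ L := by rw [hL]; exact Real.log_le_log (by norm_num) hΔ
    have : Real.log 4 = 2 * Real.log 2 := by
      rw [show (4 : ℝ) = 2 ^ 2 by norm_num, Real.log_pow]; push_cast; ring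
    have h2 := Real.log_two_gt_d9
    nlinarith
  have hLpos : 0 < L := by linarith
  have harg : 0 ≤ 2 * Real.log (20 / 9) + 2 / 3 * L := by nlinarith [log209_lb]
  have ht2 : t ^ 2 = 2 * Real.log (20 / 9) + 2 / 3 * L := by rw [ht, Real.sq_sqrt harg]
  have htpos : 0 < t := by
    rw [ht]; apply Real.sqrt_pos.2; nlinarith [log209_lb]
  have htlow : 121 / 50 ≤ t ^ 2 := by rw [ht2]; nlinarith [log209_lb]
  have htup : t ^ 2 ≤ 17 / 10 + 2 / 3 * L := by rw [ht2]; nlinarith [log209_ub]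
  set D : ℝ := Δ ^ (-(1 : ℝ) / 3) with hD
  have hDpos : 0 < D := Real.rpow_pos_of_pos hΔpos _
  set β : ℝ := Real.exp (-t ^ 2 / 2) with hβ
  have hβpos : 0 < β := Real.exp_pos _
  have hβD : β = 9 / 20 * D := by
    rw [hβ, ht2, hD]
    rw [show -(2 * Real.log (20 / 9) + 2 / 3 * L) / 2
        = -Real.log (20 / 9) + Real.log Δ * (-(1 : ℝ) / 3) by rw [hL]; ring]
    rw [Real.exp_add, Real.exp_neg, Real.exp_log (by norm_num : (0:ℝ) < 20 / 9)]
    rw [← Real.rpow_def_of_pos hΔpos]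
    norm_num
  have hδ1 : δ0 ≤ 1 := by nlinarith
  set s2 : ℝ := 2 * t / (1 + δ0) with hs2
  have hs2pos : 0 < s2 := by rw [hs2]; positivity
  have hts2 : t ≤ s2 := by
    rw [hs2, le_div_iff₀ (by linarith)]; nlinarith
  have hexp_s2 : Real.exp (-s2 ^ 2 / 2) ≤ 101 / 100 * β ^ 4 := by
    have hsq : 4 * t ^ 2 - 8 * δ0 * t ^ 2 ≤ s2 ^ 2 := by
      rw [hs2, div_pow]
      rw [le_div_iff₀ (by positivity)]
      nlinarith [sq_nonneg (δ0 * t), sq_nonneg δ0, sq_nonneg t]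
    have h2 : Real.exp (-s2 ^ 2 / 2) ≤ Real.exp (-2 * t ^ 2) * Real.exp (4 * δ0 * t ^ 2) := by
      rw [← Real.exp_add]; exact Real.exp_le_exp.2 (by linarith)
    have h3 : β ^ 4 = Real.exp (-2 * t ^ 2) := by
      rw [hβ, ← Real.exp_nat_mul]; congr 1; push_cast; ring
    have h4 : Real.exp (4 * δ0 * t ^ 2) ≤ 101 / 100 :=
      exp_small_le (by positivity) hδsmall
    calc Real.exp (-s2 ^ 2 / 2) ≤ Real.exp (-2 * t ^ 2) * Real.exp (4 * δ0 * t ^ 2) := h2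
    _ ≤ Real.exp (-2 * t ^ 2) * (101 / 100) := by
        apply mul_le_mul_of_nonneg_left h4 (Real.exp_pos _).le
    _ = 101 / 100 * β ^ 4 := by rw [h3]; ring
  have hQ : T s2 ≤ 101 / 100 * β ^ 4 / (t * Real.sqrt (2 * Real.pi)) := by
    calc T s2 ≤ Real.exp (-s2 ^ 2 / 2) / (s2 * Real.sqrt (2 * Real.pi)) := T_le hs2pos
    _ ≤ 101 / 100 * β ^ 4 / (t * Real.sqrt (2 * Real.pi)) := by
        apply div_le_div₀ (by positivity) hexp_s2 (by positivity)
        have := sqrt_two_pi_pos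
        nlinarith
  have hp : 3 / 10 * β / (t * Real.sqrt (2 * Real.pi)) ≤ T t := T_ge htpos htlow
  have hΔβ4 : Δ * β ^ 4 = (9 / 20) ^ 4 * D := by
    rw [hβD]
    have hD4 : D ^ 4 = Δ ^ (-(4 : ℝ) / 3) := by
      rw [hD, ← Real.rpow_natCast (Δ ^ (-(1:ℝ)/3)) 4, ← Real.rpow_mul hΔpos.le]
      norm_num
    have hΔD4 : Δ * D ^ 4 = D := by
      rw [hD4, hD]
      nth_rewrite 1 [← Real.rpow_one Δ]
      rw [← Real.rpow_add hΔpos]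
      norm_num
    nlinarith [hΔD4]
  have hstp := sqrt_two_pi_pos
  have hsqrtL : 0 < Real.sqrt L := Real.sqrt_pos.2 hLpos
  have hDrel : Δ ^ ((1 : ℝ) / 3) * D = 1 := by
    rw [hD, ← Real.rpow_add hΔpos]; norm_num
  have hΔ13pos : 0 < Δ ^ ((1 : ℝ) / 3) := Real.rpow_pos_of_pos hΔpos _
  have hkey : 3 / 128 * (Real.sqrt (2 * Real.pi) * t) ≤ 1497339 / 16000000 * Real.sqrt L := by
    have hpi : Real.pi < 3.15 := by
      have := Real.pi_lt_d2
      linarith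
    have hsq : (3 / 128 * (Real.sqrt (2 * Real.pi) * t)) ^ 2
        ≤ (1497339 / 16000000 * Real.sqrt L) ^ 2 := by
      have e1 : Real.sqrt (2 * Real.pi) ^ 2 = 2 * Real.pi := Real.sq_sqrt (by positivity)
      have e2 : Real.sqrt L ^ 2 = L := Real.sq_sqrt hLpos.le
      have expand1 : (3 / 128 * (Real.sqrt (2 * Real.pi) * t)) ^ 2
          = 9 / 16384 * (2 * Real.pi) * t ^ 2 := by
        rw [mul_pow, mul_pow, e1]; ring
      have expand2 : (1497339 / 16000000 * Real.sqrt L) ^ 2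
          = (1497339 / 16000000) ^ 2 * L := by rw [mul_pow, e2]
      rw [expand1, expand2]
      nlinarith [htup, hL138, hpi, Real.pi_gt_three]
    have h1 : 0 ≤ 3 / 128 * (Real.sqrt (2 * Real.pi) * t) := by positivity
    have h2 : 0 ≤ 1497339 / 16000000 * Real.sqrt L := by positivity
    nlinarith [hsq, h1, h2, sq_nonneg (3 / 128 * (Real.sqrt (2 * Real.pi) * t)
      - 1497339 / 16000000 * Real.sqrt L)]
  have hmain : 3 / 4 * (D / (32 * Real.sqrt L))
      ≤ (3 / 10 * β - 101 / 100 * (Δ * β ^ 4)) / (t * Real.sqrt (2 * Real.pi)) := by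
    rw [hΔβ4, hβD]
    have hlhs : 3 / 4 * (D / (32 * Real.sqrt L)) = 3 / 128 * D / Real.sqrt L := by
      field_simp; ring
    have hrhs : (3 / 10 * (9 / 20 * D) - 101 / 100 * ((9 / 20) ^ 4 * D))
        / (t * Real.sqrt (2 * Real.pi))
        = (1497339 / 16000000) * D / (t * Real.sqrt (2 * Real.pi)) := by
      congr 1; ring
    rw [hlhs, hrhs]
    rw [div_le_div_iff₀ hsqrtL (by positivity)]
    calc 3 / 128 * D * (t * Real.sqrt (2 * Real.pi))
        = D * (3 / 128 * (Real.sqrt (2 * Real.pi) * t)) := by ring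
    _ ≤ D * (1497339 / 16000000 * Real.sqrt L) := by
        apply mul_le_mul_of_nonneg_left hkey hDpos.le
    _ = 1497339 / 16000000 * D * Real.sqrt L := by ring
  have hαD : 1 / (32 * Δ ^ ((1 : ℝ) / 3) * Real.sqrt L) = D / (32 * Real.sqrt L) := by
    rw [div_eq_div_iff (by positivity) (by positivity)]
    calc (1 : ℝ) * (32 * Real.sqrt L)
        = (Δ ^ ((1:ℝ)/3) * D) * (32 * Real.sqrt L) := by rw [hDrel]
    _ = D * (32 * Δ ^ ((1 : ℝ) / 3) * Real.sqrt L) := by ring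
  rw [hαD]
  calc 3 / 4 * (D / (32 * Real.sqrt L))
      ≤ (3 / 10 * β - 101 / 100 * (Δ * β ^ 4)) / (t * Real.sqrt (2 * Real.pi)) := hmain
  _ = 3 / 10 * β / (t * Real.sqrt (2 * Real.pi))
      - Δ * (101 / 100 * β ^ 4 / (t * Real.sqrt (2 * Real.pi))) := by
      field_simp
  _ ≤ T t - Δ * T (2 * t / (1 + δ0)) := by
      have h1 : Δ * T (2 * t / (1 + δ0))
          ≤ Δ * (101 / 100 * β ^ 4 / (t * Real.sqrt (2 * Real.pi))) := by
        apply mul_le_mul_of_nonneg_left _ (by linarith)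
        rw [← hs2]; exact hQ
      linarith [hp]

/-! ### n-dimensional Gaussian integrals -/

variable {n : ℕ}

lemma integrable_euclid_prod (f : Fin n → ℝ → ℝ) (hf : ∀ i, Integrable (f i)) :
    Integrable (fun y : EuclideanSpace ℝ (Fin n) => ∏ i, f i (y i)) := by
  have hpres := EuclideanSpace.volume_preserving_symm_measurableEquiv_toLp (Fin n)
  have hpi : Integrable (fun y : Fin n → ℝ => ∏ i, f i (y i)) := Integrable.fintype_prod hf
  have := (hpres.integrable_comp_emb (MeasurableEquiv.measurableEmbedding _)).2 hpi
  exact this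

lemma integral_euclid_prod (f : Fin n → ℝ → ℝ) :
    ∫ y : EuclideanSpace ℝ (Fin n), ∏ i, f i (y i) = ∏ i, ∫ z, f i z := by
  have hpres := EuclideanSpace.volume_preserving_symm_measurableEquiv_toLp (Fin n)
  have h1 := hpres.integral_comp (MeasurableEquiv.measurableEmbedding _)
    (fun y : Fin n → ℝ => ∏ i, f i (y i))
  have h2 : ∫ y : Fin n → ℝ, ∏ i, f i (y i) = ∏ i, ∫ z, f i z :=
    MeasureTheory.integral_fintype_prod_eq_prod (ι := Fin n) (fun i => f i)
  rw [← h2, ← h1]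
  rfl

def rho (x : EuclideanSpace ℝ (Fin n)) : ℝ :=
  (Real.sqrt (2 * Real.pi))⁻¹ ^ n * Real.exp (-‖x‖ ^ 2 / 2)

lemma norm_sq_eq (x : EuclideanSpace ℝ (Fin n)) : ‖x‖ ^ 2 = ∑ i, x i ^ 2 := by
  rw [EuclideanSpace.norm_eq, Real.sq_sqrt (by positivity)]
  simp [sq_abs]

lemma rho_eq_prod (x : EuclideanSpace ℝ (Fin n)) : rho x = ∏ i, phi (x i) := by
  unfold rho phi
  rw [Finset.prod_mul_distrib, Finset.prod_const]
  congr 1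
  · simp
  · rw [← Real.exp_sum]
    congr 1
    rw [norm_sq_eq, neg_div, Finset.sum_div]
    simp [neg_div]

lemma rho_nonneg (x : EuclideanSpace ℝ (Fin n)) : 0 ≤ rho x := by unfold rho; positivity

lemma integrable_rho : Integrable (rho (n := n)) := by
  have := integrable_euclid_prod (fun _ : Fin n => phi) (fun _ => integrable_phi)
  exact this.congr (Filter.Eventually.of_forall fun x => (rho_eq_prod x).symm)

lemma integral_rho : ∫ x : EuclideanSpace ℝ (Fin n), rho x = 1 := by
  have h := integral_euclid_prod (fun _ : Fin n => phi)
  have h2 : ∫ x : EuclideanSpace ℝ (Fin n), rho x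
      = ∫ x : EuclideanSpace ℝ (Fin n), ∏ i, phi (x i) := by
    congr 1; ext x; exact rho_eq_prod x
  rw [h2, h, integral_phi]
  simp

lemma tail_integral [NeZero n] (v : EuclideanSpace ℝ (Fin n)) (hv : v ≠ 0) (s : ℝ) :
    ∫ x : EuclideanSpace ℝ (Fin n),
      (if s ≤ ∑ i, v i * x i then (1:ℝ) else 0) * rho x = T (s / ‖v‖) := by
  have hnv : 0 < ‖v‖ := norm_pos_iff.2 hv
  set w : EuclideanSpace ℝ (Fin n) := ‖v‖⁻¹ • v with hwdef
  have hwnorm : ‖w‖ = 1 := by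
    rw [hwdef, norm_smul, norm_inv, norm_norm]
    field_simp
  have hortho : Orthonormal ℝ (({0} : Set (Fin n)).restrict (fun _ => w)) := by
    constructor
    · intro i; exact hwnorm
    · intro i j hij
      exfalso
      exact hij (Subtype.ext (by
        have h1 := i.2; have h2 := j.2
        simp only [Set.mem_singleton_iff] at h1 h2
        rw [h1, h2]))
  obtain ⟨b, hb⟩ := hortho.exists_orthonormalBasis_extension_of_card_eq
    (by simp [finrank_euclideanSpace])
  have hb0 : b 0 = w := hb 0 rfl
  have hinner : ∀ x : EuclideanSpace ℝ (Fin n), (∑ i, v i * x i) = ‖v‖ * b.repr x 0 := by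
    intro x
    have h1 : (∑ i, v i * x i) = (inner ℝ v x : ℝ) := by
      rw [PiLp.inner_apply]
      simp [RCLike.inner_apply, conj_trivial, mul_comm]
    rw [h1, b.repr_apply_apply, hb0, hwdef, real_inner_smul_left]
    field_simp
  have hcv := MeasureTheory.integral_comp b.repr.symm
      (fun x => (if s ≤ ‖v‖ * b.repr x 0 then (1:ℝ) else 0) * rho x)
  have step1 : ∫ x : EuclideanSpace ℝ (Fin n),
      (if s ≤ ∑ i, v i * x i then (1:ℝ) else 0) * rho x
      = ∫ x : EuclideanSpace ℝ (Fin n),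
      (if s ≤ ‖v‖ * b.repr x 0 then (1:ℝ) else 0) * rho x := by
    congr 1; ext x; rw [hinner x]
  set f : Fin n → ℝ → ℝ :=
    fun i z => (if i = 0 then (if s ≤ ‖v‖ * z then (1:ℝ) else 0) else 1) * phi z with hfdef
  have step2 : ∀ y : EuclideanSpace ℝ (Fin n),
      (if s ≤ ‖v‖ * b.repr (b.repr.symm y) 0 then (1:ℝ) else 0) * rho (b.repr.symm y)
      = ∏ i, f i (y i) := by
    intro y
    have h1 : b.repr (b.repr.symm y) = y := b.repr.apply_symm_apply y
    have h2 : rho (b.repr.symm y) = rho y := by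
      unfold rho; rw [b.repr.symm.norm_map]
    rw [h1, h2, hfdef]
    rw [Finset.prod_mul_distrib, ← rho_eq_prod]
    congr 1
    rw [Finset.prod_ite_eq' Finset.univ (0 : Fin n)
      (fun i => (if s ≤ ‖v‖ * y i then (1:ℝ) else 0))]
    simp
  have hf0 : ∫ z, f 0 z = T (s / ‖v‖) := by
    have heq : (fun z => f 0 z) = Set.indicator (Set.Ici (s / ‖v‖)) phi := by
      funext z
      have hiff : s / ‖v‖ ≤ z ↔ s ≤ ‖v‖ * z := by
        rw [div_le_iff₀ hnv, mul_comm]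
      rw [hfdef]
      simp only
      simp only [if_true]
      rw [Set.indicator_apply]
      simp only [Set.mem_Ici]
      by_cases h : s / ‖v‖ ≤ z
      · rw [if_pos h, if_pos (hiff.1 h), one_mul]
      · rw [if_neg h, if_neg (fun hc => h (hiff.2 hc)), zero_mul]
    rw [heq, integral_indicator measurableSet_Ici]
    rfl
  have hfi : ∀ i : Fin n, i ≠ 0 → ∫ z, f i z = 1 := by
    intro i hi
    have heq : (fun z => f i z) = phi := by
      funext z; rw [hfdef]; simp [hi]
    rw [heq, integral_phi]
  calc ∫ x : EuclideanSpace ℝ (Fin n), (if s ≤ ∑ i, v i * x i then (1:ℝ) else 0) * rho x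
      = ∫ x : EuclideanSpace ℝ (Fin n),
        (if s ≤ ‖v‖ * b.repr x 0 then (1:ℝ) else 0) * rho x := step1
    _ = ∫ y : EuclideanSpace ℝ (Fin n),
        (if s ≤ ‖v‖ * b.repr (b.repr.symm y) 0 then (1:ℝ) else 0) * rho (b.repr.symm y) :=
        hcv.symm
    _ = ∫ y : EuclideanSpace ℝ (Fin n), ∏ i, f i (y i) := by
        congr 1; ext y; exact step2 y
    _ = ∏ i, ∫ z, f i z := integral_euclid_prod f
    _ = T (s / ‖v‖) := by
        rw [Finset.prod_eq_single (0 : Fin n) (fun i _ hi => hfi i hi) (by simp), hf0]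

lemma measurable_tailset (v : EuclideanSpace ℝ (Fin n)) (s : ℝ) :
    MeasurableSet {x : EuclideanSpace ℝ (Fin n) | s ≤ ∑ i, v i * x i} := by
  have hc : Continuous (fun x : EuclideanSpace ℝ (Fin n) => ∑ i, v i * x i) := by
    have heq : (fun x : EuclideanSpace ℝ (Fin n) => ∑ i, v i * x i)
        = fun x => (inner ℝ v x : ℝ) := by
      funext x; rw [PiLp.inner_apply]; simp [RCLike.inner_apply, conj_trivial, mul_comm]
    rw [heq]
    exact Continuous.inner continuous_const continuous_id
  exact (isClosed_le continuous_const hc).measurableSet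

open Finset in
lemma extract_indep
    {V : Type*} [Fintype V] [DecidableEq V]
    (P : Finset (Finset V)) (hP : ∀ pr ∈ P, pr.card = 2)
    (S0 : Finset V) (bad : Finset (Finset V))
    (hbad : ∀ pr, pr ∈ bad ↔ pr ∈ P ∧ pr ⊆ S0) :
    ∃ S : Finset V, S ⊆ S0 ∧ (∀ a ∈ S, ∀ b ∈ S, a ≠ b → ({a, b} : Finset V) ∉ P) ∧
      (S0.card : ℝ) - bad.card ≤ S.card := by
  classical
  let g : V ≃ Fin (Fintype.card V) := Fintype.equivFin V
  set S : Finset V := S0.filter (fun a => ∀ b ∈ S0, ({a, b} : Finset V) ∈ P → g a < g b)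
    with hSdef
  have hsub : S ⊆ S0 := filter_subset _ _
  refine ⟨S, hsub, ?_, ?_⟩
  · intro a ha b hb hab hmem
    have ha' := (Finset.mem_filter.1 ha).2
    have hb' := (Finset.mem_filter.1 hb).2
    have h1 : g a < g b := ha' b (hsub hb) hmem
    have h2 : g b < g a := hb' a (hsub ha) (by rwa [Finset.pair_comm])
    exact absurd (h1.trans h2) (lt_irrefl _)
  · -- size bound
    have hwit : ∀ a ∈ S0 \ S, ∃ b, b ∈ S0 ∧ ({a, b} : Finset V) ∈ P ∧ g b < g a := by
      intro a ha
      rw [Finset.mem_sdiff] at ha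
      obtain ⟨haS0, haS⟩ := ha
      rw [hSdef, Finset.mem_filter] at haS
      push_neg at haS
      obtain ⟨b, hb1, hb2, hb3⟩ := haS haS0
      refine ⟨b, hb1, hb2, ?_⟩
      have hne : a ≠ b := by
        rintro rfl
        have := hP _ hb2
        simp at this
      have : g b ≠ g a := fun h => hne (g.injective h.symm)
      exact lt_of_le_of_ne hb3 this
    set w : ∀ a ∈ S0 \ S, V := fun a ha => Classical.choose (hwit a ha) with hwdef
    have hw : ∀ a (ha : a ∈ S0 \ S), (w a ha) ∈ S0 ∧ ({a, w a ha} : Finset V) ∈ P ∧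
        g (w a ha) < g a := fun a ha => Classical.choose_spec (hwit a ha)
    have hcard : (S0 \ S).card ≤ bad.card := by
      have := Finset.card_le_card_of_injOn
        (f := fun a => if ha : a ∈ S0 \ S then ({a, w a ha} : Finset V) else ∅)
        (s := S0 \ S) (t := bad) ?_ ?_
      · exact this
      · intro a ha
        simp only
        rw [Finset.mem_coe] at ha ⊢
        rw [dif_pos ha]
        obtain ⟨h1, h2, _⟩ := hw a ha
        rw [hbad]
        refine ⟨h2, ?_⟩
        intro x hx
        rw [Finset.mem_insert, Finset.mem_singleton] at hx
        rcases hx with rfl | rfl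
        · exact (mem_sdiff.1 ha).1
        · exact h1
      · intro a1 h1 a2 h2 heq
        rw [Finset.mem_coe] at h1 h2
        simp only at heq
        rw [dif_pos h1, dif_pos h2] at heq
        obtain ⟨_, _, hg1⟩ := hw a1 h1
        obtain ⟨_, _, hg2⟩ := hw a2 h2
        by_contra hne
        have ha1 : a1 ∈ ({a2, w a2 h2} : Finset V) := by
          rw [← heq]; exact Finset.mem_insert_self _ _
        have ha2 : a2 ∈ ({a1, w a1 h1} : Finset V) := by
          rw [heq]; exact Finset.mem_insert_self _ _
        rw [Finset.mem_insert, Finset.mem_singleton] at ha1 ha2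
        rcases ha1 with h | h
        · exact hne h
        · subst h
          rcases ha2 with h' | h'
          · exact hne h'.symm
          · rw [← h'] at hg1
            exact absurd (hg1.trans hg2) (lt_irrefl _)
    have hcards : (S0 \ S).card + S.card = S0.card := Finset.card_sdiff_add_card_eq_card hsub
    have : (S0.card : ℝ) = (S0 \ S).card + S.card := by exact_mod_cast hcards.symm
    rw [this]
    have : ((S0 \ S).card : ℝ) ≤ bad.card := by exact_mod_cast hcard
    linarith

lemma integrable_ite_rho {p : EuclideanSpace ℝ (Fin n) → Prop} [DecidablePred p]
    (hp : MeasurableSet {x | p x}) :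
    Integrable (fun x : EuclideanSpace ℝ (Fin n) => (if p x then (1:ℝ) else 0) * rho x) := by
  have h := integrable_rho.indicator hp
  refine h.congr (Filter.Eventually.of_forall fun x => ?_)
  rw [Set.indicator_apply]
  simp only [Set.mem_setOf_eq]
  by_cases hx : p x
  · simp [hx]
  · simp [hx]

end OddIndepAux

end OddIndepAuxSection

set_option maxHeartbeats 4000000 in
open OddIndepAux MeasureTheory in
theorem exists_large_odd_independent_set
    {V : Type*} [Fintype V] [DecidableEq V]
    (n : ℕ) (hn : 2 ≤ n) (hcard : Fintype.card V = n)
    (E : Finset (Finset V)) (hE : ∀ e ∈ E, e.card = 3)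
    (ε : ℝ) (hε : ε = 1 / (n : ℝ) ^ 100)
    (u : V → Fin n → ℝ) (hunit : ∀ a, ∑ i, u a i ^ 2 = 1)
    (hbal : ∀ a b c : V, a ≠ b → a ≠ c → b ≠ c → ({a, b, c} : Finset V) ∈ E →
      ∑ i, (u a i + u b i + u c i) ^ 2 ≤ 18 * ε)
    (Δ : ℝ) (hΔ : 4 ≤ Δ) (hEcard : (E.card : ℝ) ≤ Δ * n / 3)
    (α : ℝ) (hα : α = 1 / (32 * Δ ^ ((1 : ℝ) / 3) * Real.sqrt (Real.log Δ))) :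
    ∃ S : Finset V, (∀ e ∈ E, (e ∩ S).card ≤ 1) ∧
      (3 / 4) * α * n ≤ (S.card : ℝ) := by
  classical
  by_cases hbig : 3 / 4 * α * n ≤ 1
  · -- trivial singleton case
    have hpos : 0 < Fintype.card V := by rw [hcard]; omega
    obtain ⟨v0⟩ := Fintype.card_pos_iff.1 hpos
    refine ⟨{v0}, fun e _ => ?_, ?_⟩
    · calc (e ∩ {v0}).card ≤ ({v0} : Finset V).card :=
        Finset.card_le_card Finset.inter_subset_right
      _ = 1 := Finset.card_singleton v0
    · simpa using hbig
  push_neg at hbig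
  haveI : NeZero n := ⟨by omega⟩
  have hΔpos : (0:ℝ) < Δ := by linarith
  set L : ℝ := Real.log Δ with hLdef
  have hL138 : 138 / 100 ≤ L := by
    have h4 : Real.log 4 ≤ L := by rw [hLdef]; exact Real.log_le_log (by norm_num) hΔ
    have h42 : Real.log 4 = 2 * Real.log 2 := by
      rw [show (4 : ℝ) = 2 ^ 2 by norm_num, Real.log_pow]; push_cast; ring
    have h2 := Real.log_two_gt_d9
    nlinarith
  have hLpos : 0 < L := by linarith
  have hsqrtL1 : 1 ≤ Real.sqrt L := by
    rw [show (1:ℝ) = Real.sqrt 1 by simp]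
    exact Real.sqrt_le_sqrt (by linarith)
  have hΔ13_1 : 1 ≤ Δ ^ ((1:ℝ)/3) := by
    calc (1:ℝ) = 1 ^ ((1:ℝ)/3) := (Real.one_rpow _).symm
    _ ≤ Δ ^ ((1:ℝ)/3) := Real.rpow_le_rpow (by norm_num) (by linarith) (by norm_num)
  have hΔ13pos : 0 < Δ ^ ((1:ℝ)/3) := by linarith
  have hsqrtLpos : 0 < Real.sqrt L := by linarith
  have hαpos : 0 < α := by rw [hα]; positivity
  have hnR : (2:ℝ) ≤ (n:ℝ) := by exact_mod_cast hn
  have hnpos : (0:ℝ) < (n:ℝ) := by linarith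
  -- n is at least 43
  have hn43 : (43:ℝ) ≤ (n:ℝ) := by
    have hα32 : α ≤ 1 / 32 := by
      rw [hα, div_le_div_iff₀ (by positivity) (by norm_num)]
      nlinarith
    have h2 : (42:ℝ) < (n:ℝ) := by nlinarith
    have h3 : (42:ℕ) < n := by exact_mod_cast h2
    have h4 : (43:ℕ) ≤ n := h3
    exact_mod_cast h4
  -- log Δ is at most 3 log n
  have hXS : 32 * Δ ^ ((1:ℝ)/3) * Real.sqrt L < 3 / 4 * n := by
    have h := hbig
    rw [hα] at h
    have hpos : 0 < 32 * Δ ^ ((1:ℝ)/3) * Real.sqrt L := by positivity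
    calc 32 * Δ ^ ((1:ℝ)/3) * Real.sqrt L
        = (32 * Δ ^ ((1:ℝ)/3) * Real.sqrt L) * 1 := by ring
    _ < (32 * Δ ^ ((1:ℝ)/3) * Real.sqrt L)
        * (3/4 * (1 / (32 * Δ ^ ((1:ℝ)/3) * Real.sqrt L)) * n) := by
        exact mul_lt_mul_of_pos_left h hpos
    _ = 3/4 * n := by field_simp
  have hΔ13n : Δ ^ ((1:ℝ)/3) ≤ (n:ℝ) := by nlinarith
  have hLlog : L ≤ 3 * Real.log n := by
    have h1 : Real.log (Δ ^ ((1:ℝ)/3)) = (1/3) * L := by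
      rw [Real.log_rpow hΔpos, hLdef]
    have h2 : Real.log (Δ ^ ((1:ℝ)/3)) ≤ Real.log n :=
      Real.log_le_log hΔ13pos hΔ13n
    rw [h1] at h2
    linarith
  have hlogn : Real.log n ≤ (n:ℝ) - 1 := Real.log_le_sub_one_of_pos hnpos
  -- threshold t and error δ0
  set t : ℝ := Real.sqrt (2 * Real.log (20 / 9) + 2 / 3 * L) with htdef
  have harg : 0 ≤ 2 * Real.log (20 / 9) + 2 / 3 * L := by nlinarith [log209_lb]
  have ht2 : t ^ 2 = 2 * Real.log (20 / 9) + 2 / 3 * L := by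
    rw [htdef, Real.sq_sqrt harg]
  have htpos : 0 < t := by
    rw [htdef]; exact Real.sqrt_pos.2 (by nlinarith [log209_lb])
  have hεpos : 0 < ε := by rw [hε]; positivity
  set δ0 : ℝ := Real.sqrt (18 * ε) with hδdef
  have hδ0 : 0 ≤ δ0 := Real.sqrt_nonneg _
  have hδsq : δ0 ^ 2 = 18 * ε := Real.sq_sqrt (by positivity)
  have hδub : δ0 ≤ 5 / (n:ℝ) ^ 50 := by
    have h0 : (5 / (n:ℝ) ^ 50) ^ 2 = 25 / (n:ℝ) ^ 100 := by
      rw [div_pow, ← pow_mul]; norm_num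
    have h1 : 18 * ε ≤ (5 / (n:ℝ) ^ 50) ^ 2 := by
      rw [hε, h0, mul_one_div, div_le_div_iff₀ (by positivity) (by positivity)]
      nlinarith [pow_pos hnpos 100]
    calc δ0 ≤ Real.sqrt ((5 / (n:ℝ) ^ 50) ^ 2) := by
          rw [hδdef]; exact Real.sqrt_le_sqrt h1
    _ = 5 / (n:ℝ) ^ 50 := Real.sqrt_sq (by positivity)
  have ht2up : t ^ 2 ≤ 2 * (n:ℝ) := by
    rw [ht2]; nlinarith [log209_ub]
  have hδsmall : 4 * δ0 * t ^ 2 ≤ 1 / 200 := by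
    have hn49 : (8000:ℝ) ≤ (n:ℝ) ^ 49 := by
      calc (8000:ℝ) ≤ 43 ^ 3 := by norm_num
      _ ≤ (n:ℝ) ^ 3 := by
          apply pow_le_pow_left₀ (by norm_num) hn43
      _ ≤ (n:ℝ) ^ 49 := by
          apply pow_le_pow_right₀ (by linarith) (by norm_num)
    have h50 : (n:ℝ) ^ 50 = (n:ℝ) ^ 49 * n := by ring
    have hstep : 4 * δ0 * t ^ 2 ≤ 4 * (5 / (n:ℝ) ^ 50) * (2 * n) := by
      have h1 : 4 * δ0 ≤ 4 * (5 / (n:ℝ) ^ 50) := by linarith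
      apply mul_le_mul h1 ht2up (by positivity) (by positivity)
    have heval : 4 * (5 / (n:ℝ) ^ 50) * (2 * n) = 40 / (n:ℝ) ^ 49 := by
      rw [h50]; field_simp; ring
    rw [heval] at hstep
    have hfin : 40 / (n:ℝ) ^ 49 ≤ 1 / 200 := by
      rw [div_le_div_iff₀ (by positivity) (by norm_num)]
      linarith
    linarith
  have hδlt1 : δ0 < 1 := by
    have h1 : (5:ℝ) / (n:ℝ) ^ 50 < 1 := by
      rw [div_lt_one (by positivity)]
      calc (5:ℝ) < 43 := by norm_num
      _ ≤ (n:ℝ) := hn43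
      _ ≤ (n:ℝ) ^ 50 := le_self_pow₀ (by linarith) (by norm_num)
    linarith
  -- vectors in Euclidean space
  set uu : V → EuclideanSpace ℝ (Fin n) :=
    fun a => (WithLp.equiv 2 (Fin n → ℝ)).symm (u a) with huudef
  have huu_apply : ∀ a i, uu a i = u a i := fun a i => rfl
  have huunorm : ∀ a, ‖uu a‖ = 1 := by
    intro a
    have h1 : ‖uu a‖ ^ 2 = 1 := by
      rw [norm_sq_eq]
      simpa [huu_apply] using hunit a
    calc ‖uu a‖ = Real.sqrt (‖uu a‖ ^ 2) := (Real.sqrt_sq (norm_nonneg _)).symm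
    _ = Real.sqrt 1 := by rw [h1]
    _ = 1 := Real.sqrt_one
  -- threshold sets
  set S0 : EuclideanSpace ℝ (Fin n) → Finset V :=
    fun x => Finset.univ.filter (fun a => t ≤ ∑ i, uu a i * x i) with hS0def
  set P : Finset (Finset V) := E.biUnion (fun e => Finset.powersetCard 2 e) with hPdef
  set bad : EuclideanSpace ℝ (Fin n) → Finset (Finset V) :=
    fun x => P.filter (fun pr => pr ⊆ S0 x) with hbaddef
  have hPcard : ∀ pr ∈ P, pr.card = 2 := by
    intro pr hpr
    rw [hPdef, Finset.mem_biUnion] at hpr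
    obtain ⟨e, _, hmem⟩ := hpr
    exact (Finset.mem_powersetCard.1 hmem).2
  have hPsize : (P.card : ℝ) ≤ Δ * n := by
    have h1 : P.card ≤ ∑ e ∈ E, (Finset.powersetCard 2 e).card := by
      rw [hPdef]; exact Finset.card_biUnion_le
    have h3 : P.card ≤ 3 * E.card := by
      calc P.card ≤ ∑ e ∈ E, (Finset.powersetCard 2 e).card := h1
      _ = ∑ _e ∈ E, 3 := Finset.sum_congr rfl (fun e he => by
          rw [Finset.card_powersetCard, hE e he]
          rfl)
      _ = 3 * E.card := by rw [Finset.sum_const, smul_eq_mul, mul_comm]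
    calc (P.card:ℝ) ≤ 3 * (E.card:ℝ) := by exact_mod_cast h3
    _ ≤ 3 * (Δ * n / 3) := by linarith
    _ = Δ * n := by ring
  -- for each pair, a suitable vector
  have hpair : ∀ pr ∈ P, ∃ v : EuclideanSpace ℝ (Fin n),
      (1 - δ0 ≤ ‖v‖ ∧ ‖v‖ ≤ 1 + δ0) ∧
      ∀ x, pr ⊆ S0 x → 2 * t ≤ ∑ i, v i * x i := by
    intro pr hpr
    rw [hPdef, Finset.mem_biUnion] at hpr
    obtain ⟨e, he, hmem⟩ := hpr
    rw [Finset.mem_powersetCard] at hmem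
    obtain ⟨hsub, hcard2⟩ := hmem
    obtain ⟨a, b, hab, rfl⟩ := Finset.card_eq_two.1 hcard2
    have hcard3 := hE e he
    have hcards : (e \ {a, b}).card = 1 := by
      rw [Finset.card_sdiff_of_subset hsub, hcard3, hcard2]
    obtain ⟨c, hc⟩ := Finset.card_eq_one.1 hcards
    have hcmem : c ∈ e \ ({a, b} : Finset V) := by
      rw [hc]; exact Finset.mem_singleton_self c
    rw [Finset.mem_sdiff] at hcmem
    obtain ⟨hce, hcab⟩ := hcmem
    have hca : c ≠ a := fun h => hcab (by rw [h]; exact Finset.mem_insert_self a {b})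
    have hcb : c ≠ b := fun h => hcab
      (by rw [h]; exact Finset.mem_insert_of_mem (Finset.mem_singleton_self b))
    have habc : ({a, b, c} : Finset V) = e := by
      apply Finset.eq_of_subset_of_card_le
      · intro x hx
        rw [Finset.mem_insert, Finset.mem_insert, Finset.mem_singleton] at hx
        rcases hx with rfl | rfl | rfl
        · exact hsub (Finset.mem_insert_self _ _)
        · exact hsub (Finset.mem_insert_of_mem (Finset.mem_singleton_self _))
        · exact hce
      · rw [hcard3]
        have hc3 : ({a, b, c} : Finset V).card = 3 := by
          rw [Finset.card_insert_of_notMem (by simp [hab, hca.symm]),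
            Finset.card_insert_of_notMem (by simp [hcb.symm]), Finset.card_singleton]
        rw [hc3]
    have hsum := hbal a b c hab hca.symm hcb.symm (by rw [habc]; exact he)
    have hw3 : ‖uu a + uu b + uu c‖ ≤ δ0 := by
      have h1 : ‖uu a + uu b + uu c‖ ^ 2 ≤ 18 * ε := by
        rw [norm_sq_eq]
        have hco : ∀ i, (uu a + uu b + uu c) i = u a i + u b i + u c i := fun i => rfl
        calc (∑ i, (uu a + uu b + uu c) i ^ 2)
            = ∑ i, (u a i + u b i + u c i) ^ 2 := by
              exact Finset.sum_congr rfl (fun i _ => by rw [hco i])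
        _ ≤ 18 * ε := hsum
      calc ‖uu a + uu b + uu c‖
          = Real.sqrt (‖uu a + uu b + uu c‖ ^ 2) := (Real.sqrt_sq (norm_nonneg _)).symm
      _ ≤ Real.sqrt (δ0 ^ 2) := Real.sqrt_le_sqrt (by rw [hδsq]; exact h1)
      _ = δ0 := Real.sqrt_sq hδ0
    have hnc : ‖uu c‖ = 1 := huunorm c
    refine ⟨uu a + uu b, ⟨?_, ?_⟩, ?_⟩
    · have hkey : uu c - (uu a + uu b + uu c) = -(uu a + uu b) := by abel
      have h2 : ‖uu c‖ - ‖uu a + uu b + uu c‖ ≤ ‖uu c - (uu a + uu b + uu c)‖ :=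
        norm_sub_norm_le _ _
      rw [hkey, norm_neg] at h2
      rw [hnc] at h2
      linarith
    · have hkey : uu a + uu b = (uu a + uu b + uu c) - uu c := by abel
      calc ‖uu a + uu b‖ = ‖(uu a + uu b + uu c) - uu c‖ := by rw [← hkey]
      _ ≤ ‖uu a + uu b + uu c‖ + ‖uu c‖ := norm_sub_le _ _
      _ ≤ δ0 + 1 := by rw [hnc]; linarith
      _ = 1 + δ0 := by ring
    · intro x hx
      have hain : a ∈ S0 x := hx (Finset.mem_insert_self _ _)
      have hbin : b ∈ S0 x := hx (Finset.mem_insert_of_mem (Finset.mem_singleton_self _))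
      rw [hS0def] at hain hbin
      simp only [Finset.mem_filter, Finset.mem_univ, true_and] at hain hbin
      have hco : ∀ i, (uu a + uu b) i = uu a i + uu b i := fun i => rfl
      have hsplit : (∑ i, (uu a + uu b) i * x i)
          = (∑ i, uu a i * x i) + (∑ i, uu b i * x i) := by
        rw [← Finset.sum_add_distrib]
        exact Finset.sum_congr rfl (fun i _ => by rw [hco i]; ring)
      rw [hsplit]
      linarith
  -- integrability and integral values
  have hIntA : ∀ a : V, Integrable (fun x : EuclideanSpace ℝ (Fin n) =>
      (if t ≤ ∑ i, uu a i * x i then (1:ℝ) else 0) * rho x) :=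
    fun a => integrable_ite_rho (measurable_tailset (uu a) t)
  have hValA : ∀ a : V, (∫ x : EuclideanSpace ℝ (Fin n),
      (if t ≤ ∑ i, uu a i * x i then (1:ℝ) else 0) * rho x) = T t := by
    intro a
    have h0 : uu a ≠ 0 := by
      intro h
      have hh := huunorm a
      rw [h, norm_zero] at hh
      norm_num at hh
    rw [tail_integral (uu a) h0 t, huunorm a]
    norm_num
  have hmeasPr : ∀ pr : Finset V,
      MeasurableSet {x : EuclideanSpace ℝ (Fin n) | pr ⊆ S0 x} := by
    intro pr
    have heq : {x : EuclideanSpace ℝ (Fin n) | pr ⊆ S0 x}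
        = ⋂ a ∈ pr, {x : EuclideanSpace ℝ (Fin n) | t ≤ ∑ i, uu a i * x i} := by
      ext x
      simp only [Set.mem_setOf_eq, Set.mem_iInter, hS0def, Finset.subset_iff,
        Finset.mem_filter, Finset.mem_univ, true_and]
    rw [heq]
    exact MeasurableSet.biInter pr.countable_toSet (fun a _ => measurable_tailset (uu a) t)
  have hIntPr : ∀ pr : Finset V, Integrable (fun x : EuclideanSpace ℝ (Fin n) =>
      (if pr ⊆ S0 x then (1:ℝ) else 0) * rho x) :=
    fun pr => integrable_ite_rho (hmeasPr pr)
  have hValPr : ∀ pr ∈ P, (∫ x : EuclideanSpace ℝ (Fin n),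
      (if pr ⊆ S0 x then (1:ℝ) else 0) * rho x) ≤ T (2 * t / (1 + δ0)) := by
    intro pr hpr
    obtain ⟨v, ⟨hv1, hv2⟩, himp⟩ := hpair pr hpr
    have hvpos : 0 < ‖v‖ := by linarith
    have hvne : v ≠ 0 := by
      intro h; rw [h, norm_zero] at hvpos; exact lt_irrefl _ hvpos
    have hmono : ∀ x, (if pr ⊆ S0 x then (1:ℝ) else 0) * rho x
        ≤ (if 2 * t ≤ ∑ i, v i * x i then (1:ℝ) else 0) * rho x := by
      intro x
      by_cases h : pr ⊆ S0 x
      · rw [if_pos h, if_pos (himp x h)]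
      · rw [if_neg h, zero_mul]
        apply mul_nonneg _ (rho_nonneg x)
        by_cases h2 : 2 * t ≤ ∑ i, v i * x i
        · rw [if_pos h2]; norm_num
        · rw [if_neg h2]
    calc (∫ x : EuclideanSpace ℝ (Fin n), (if pr ⊆ S0 x then (1:ℝ) else 0) * rho x)
        ≤ ∫ x : EuclideanSpace ℝ (Fin n),
          (if 2 * t ≤ ∑ i, v i * x i then (1:ℝ) else 0) * rho x :=
        integral_mono (hIntPr pr) (integrable_ite_rho (measurable_tailset v (2*t))) hmono
    _ = T (2 * t / ‖v‖) := tail_integral v hvne (2 * t)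
    _ ≤ T (2 * t / (1 + δ0)) := by
        apply T_mono
        apply div_le_div_of_nonneg_left (by positivity) hvpos hv2
  -- the first moment estimate
  set C : ℝ := 3 / 4 * α * n with hCdef
  have hnum := numeric_core hΔ hLdef htdef hδ0 hδsmall
  have hEG : C ≤ ∫ x : EuclideanSpace ℝ (Fin n),
      ((∑ a : V, (if t ≤ ∑ i, uu a i * x i then (1:ℝ) else 0) * rho x)
      - ∑ pr ∈ P, (if pr ⊆ S0 x then (1:ℝ) else 0) * rho x) := by
    rw [integral_sub (integrable_finset_sum _ (fun a _ => hIntA a))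
      (integrable_finset_sum _ (fun pr _ => hIntPr pr))]
    rw [integral_finset_sum _ (fun a _ => hIntA a),
      integral_finset_sum _ (fun pr _ => hIntPr pr)]
    have h1 : (∑ a : V, ∫ x : EuclideanSpace ℝ (Fin n),
        (if t ≤ ∑ i, uu a i * x i then (1:ℝ) else 0) * rho x) = (n:ℝ) * T t := by
      rw [Finset.sum_congr rfl (fun a _ => hValA a), Finset.sum_const,
        Finset.card_univ, hcard, nsmul_eq_mul]
    have h2 : (∑ pr ∈ P, ∫ x : EuclideanSpace ℝ (Fin n),
        (if pr ⊆ S0 x then (1:ℝ) else 0) * rho x) ≤ (P.card : ℝ) * T (2 * t / (1 + δ0)) := by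
      calc (∑ pr ∈ P, ∫ x : EuclideanSpace ℝ (Fin n),
          (if pr ⊆ S0 x then (1:ℝ) else 0) * rho x)
          ≤ ∑ _pr ∈ P, T (2 * t / (1 + δ0)) := Finset.sum_le_sum hValPr
      _ = (P.card : ℝ) * T (2 * t / (1 + δ0)) := by
          rw [Finset.sum_const, nsmul_eq_mul]
    have h3 : (P.card : ℝ) * T (2 * t / (1 + δ0)) ≤ Δ * n * T (2 * t / (1 + δ0)) :=
      mul_le_mul_of_nonneg_right hPsize (T_nonneg _)
    have h4 : C ≤ (n:ℝ) * (T t - Δ * T (2 * t / (1 + δ0))) := by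
      rw [hCdef, hα]
      calc 3 / 4 * (1 / (32 * Δ ^ ((1:ℝ)/3) * Real.sqrt L)) * n
          = (n:ℝ) * (3 / 4 * (1 / (32 * Δ ^ ((1:ℝ)/3) * Real.sqrt L))) := by ring
      _ ≤ (n:ℝ) * (T t - Δ * T (2 * t / (1 + δ0))) :=
          mul_le_mul_of_nonneg_left hnum (by linarith)
    rw [h1]
    nlinarith [h2, h3, h4]
  -- a good point exists
  have hex : ∃ x : EuclideanSpace ℝ (Fin n),
      C ≤ ((S0 x).card : ℝ) - ((bad x).card : ℝ) := by
    by_contra hno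
    push_neg at hno
    set K : ℤ := ⌈C⌉ - 1 with hKdef
    have hcardA : ∀ x : EuclideanSpace ℝ (Fin n), ((S0 x).card : ℝ)
        = ∑ a : V, (if t ≤ ∑ i, uu a i * x i then (1:ℝ) else 0) := by
      intro x
      rw [hS0def]
      simp only
      rw [Finset.card_filter]
      push_cast
      rfl
    have hcardB : ∀ x : EuclideanSpace ℝ (Fin n), ((bad x).card : ℝ)
        = ∑ pr ∈ P, (if pr ⊆ S0 x then (1:ℝ) else 0) := by
      intro x
      rw [hbaddef]
      simp only
      rw [Finset.card_filter]
      push_cast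
      rfl
    have hpt : ∀ x : EuclideanSpace ℝ (Fin n),
        ((∑ a : V, (if t ≤ ∑ i, uu a i * x i then (1:ℝ) else 0) * rho x)
        - ∑ pr ∈ P, (if pr ⊆ S0 x then (1:ℝ) else 0) * rho x) ≤ (K:ℝ) * rho x := by
      intro x
      have hz : (((S0 x).card : ℤ) - ((bad x).card : ℤ) : ℝ) < C := by
        push_cast
        exact hno x
      have hzK : ((S0 x).card : ℤ) - ((bad x).card : ℤ) ≤ K := by
        rw [hKdef]
        have h1 : ((S0 x).card : ℤ) - ((bad x).card : ℤ) < ⌈C⌉ := by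
          rw [Int.lt_ceil]
          exact_mod_cast hz
        omega
      have hzR : (((S0 x).card : ℝ) - ((bad x).card : ℝ)) ≤ (K:ℝ) := by
        exact_mod_cast hzK
      have hrw : ((∑ a : V, (if t ≤ ∑ i, uu a i * x i then (1:ℝ) else 0) * rho x)
          - ∑ pr ∈ P, (if pr ⊆ S0 x then (1:ℝ) else 0) * rho x)
          = (((S0 x).card : ℝ) - ((bad x).card : ℝ)) * rho x := by
        rw [← Finset.sum_mul, ← Finset.sum_mul, ← hcardA x, ← hcardB x, sub_mul]
      rw [hrw]
      exact mul_le_mul_of_nonneg_right hzR (rho_nonneg x)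
    have hGint : Integrable (fun x : EuclideanSpace ℝ (Fin n) =>
        ((∑ a : V, (if t ≤ ∑ i, uu a i * x i then (1:ℝ) else 0) * rho x)
        - ∑ pr ∈ P, (if pr ⊆ S0 x then (1:ℝ) else 0) * rho x)) :=
      (integrable_finset_sum _ (fun a _ => hIntA a)).sub
        (integrable_finset_sum _ (fun pr _ => hIntPr pr))
    have hup : (∫ x : EuclideanSpace ℝ (Fin n),
        ((∑ a : V, (if t ≤ ∑ i, uu a i * x i then (1:ℝ) else 0) * rho x)
        - ∑ pr ∈ P, (if pr ⊆ S0 x then (1:ℝ) else 0) * rho x)) ≤ (K:ℝ) := by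
      calc (∫ x : EuclideanSpace ℝ (Fin n),
          ((∑ a : V, (if t ≤ ∑ i, uu a i * x i then (1:ℝ) else 0) * rho x)
          - ∑ pr ∈ P, (if pr ⊆ S0 x then (1:ℝ) else 0) * rho x))
          ≤ ∫ x : EuclideanSpace ℝ (Fin n), (K:ℝ) * rho x :=
          integral_mono hGint (integrable_rho.const_mul _) hpt
      _ = (K:ℝ) * ∫ x : EuclideanSpace ℝ (Fin n), rho x := integral_const_mul _ _
      _ = (K:ℝ) := by rw [integral_rho, mul_one]
    have hKC : (K:ℝ) < C := by
      rw [hKdef]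
      push_cast
      linarith [Int.ceil_lt_add_one C]
    linarith [hEG, hup]
  obtain ⟨x0, hx0⟩ := hex
  obtain ⟨S, hSsub, hSnopair, hScard⟩ := extract_indep P hPcard (S0 x0) (bad x0)
    (fun pr => by simp only [hbaddef, Finset.mem_filter])
  refine ⟨S, ?_, ?_⟩
  · intro e he
    rw [Finset.card_le_one]
    intro a ha b hb
    by_contra hab
    rw [Finset.mem_inter] at ha hb
    refine hSnopair a ha.2 b hb.2 hab ?_
    rw [hPdef, Finset.mem_biUnion]
    refine ⟨e, he, Finset.mem_powersetCard.2 ⟨?_, Finset.card_pair hab⟩⟩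
    intro x hx
    rw [Finset.mem_insert, Finset.mem_singleton] at hx
    rcases hx with rfl | rfl
    · exact ha.1
    · exact hb.1
  · exact le_trans hx0 hScard
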